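/- (Nimber Extension Rule) For any impartial games G, H and any nimber *n: (G ∘ H) + *n is a P-position if and only if (G + *n) ∘ H is a P-position. -/

import Mathlib

/-- Finite impartial games, given by their (finite list of) options. -/
inductive IGame : Type where
  | mk : List IGame → IGame

/-- The empty game `E`, with no options. -/
abbrev E : IGame := .mk []

/-- The list of options of a game. -/
def IGame.opts : IGame → List IGame
  | .mk l => l

theorem IGame.sizeOf_lt_of_mem {g : IGame} {l : List IGame} (h : g ∈ l) :
    sizeOf g < sizeOf (IGame.mk l) := by
  have := List.sizeOf_lt_of_mem h
  simp only [IGame.mk.sizeOf_spec]; omega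

/-- The pass operator: `E* = E`; for `G` with options, `G*` has options
`G` together with `g*` for each option `g` of `G`. -/
def pass : IGame → IGame
  | .mk [] => .mk []
  | .mk l => .mk (.mk l :: l.attach.map fun g => pass g.1)
decreasing_by
  exact IGame.sizeOf_lt_of_mem g.2

/-- The split sum `G ∘ H`. -/
def split : IGame → IGame → IGame
  | .mk [], _ => .mk []
  | .mk gs, .mk [] => .mk gs
  | .mk gs, .mk hs =>
      .mk ((hs.attach.map fun h => split (.mk gs) h.1) ++
           (gs.attach.map fun g => split g.1 (.mk hs)))
termination_by G H => sizeOf G + sizeOf H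
decreasing_by
  · have := IGame.sizeOf_lt_of_mem h.2; omega
  · have := IGame.sizeOf_lt_of_mem g.2; omega

/-- Disjunctive sum of games. -/
def addG : IGame → IGame → IGame
  | .mk gs, .mk hs =>
      .mk ((gs.attach.map fun g => addG g.1 (.mk hs)) ++
           (hs.attach.map fun h => addG (.mk gs) h.1))
termination_by G H => sizeOf G + sizeOf H
decreasing_by
  · have := IGame.sizeOf_lt_of_mem g.2; omega
  · have := IGame.sizeOf_lt_of_mem h.2; omega

/-- The nimber `*n`, with options `*0, …, *(n-1)`. -/
def star : ℕ → IGame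
  | n => .mk ((List.range n).attach.map fun k => star k.1)
termination_by n => n
decreasing_by have := List.mem_range.mp k.2; omega

/-- `G` is a P-position (previous player wins under normal play):
every option is an N-position. -/
def PPos : IGame → Prop
  | .mk l => ∀ g ∈ l.attach, ¬ PPos g.1
decreasing_by exact IGame.sizeOf_lt_of_mem g.2

/-- Identity of game trees (extensionally: same set of options, recursively). -/
def Ident : IGame → IGame → Prop
  | .mk gs, .mk hs =>
      (∀ g ∈ gs.attach, ∃ h ∈ hs.attach, Ident g.1 h.1) ∧
      (∀ h ∈ hs.attach, ∃ g ∈ gs.attach, Ident g.1 h.1)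
termination_by G H => sizeOf G + sizeOf H
decreasing_by
  · have := IGame.sizeOf_lt_of_mem g.2
    have := IGame.sizeOf_lt_of_mem h.2; omega
  · have := IGame.sizeOf_lt_of_mem g.2
    have := IGame.sizeOf_lt_of_mem h.2; omega

lemma star_eq (n : ℕ) : _root_.star n = .mk ((List.range n).map _root_.star) := by
  rw [_root_.star]; congr 1; exact List.attach_map_val

lemma PPos_mk (l : List IGame) : PPos (.mk l) ↔ ∀ g ∈ l, ¬ PPos g := by
  rw [PPos]
  exact ⟨fun h g hg => h ⟨g, hg⟩ (List.mem_attach _ _), fun h g _ => h g.1 g.2⟩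

lemma addG_mk (gs hs : List IGame) :
    addG (.mk gs) (.mk hs) =
      .mk (gs.map (fun g => addG g (.mk hs)) ++ hs.map (fun h => addG (.mk gs) h)) := by
  rw [addG]; congr 1
  simp [List.attach_map_val]

lemma split_nil_left (H : IGame) : split (.mk []) H = .mk [] := by rw [split]

lemma split_nil_right (G : IGame) : split G (.mk []) = G := by
  obtain ⟨gs⟩ := G
  cases gs with
  | nil => rw [split]
  | cons a l => rw [split]; simp

lemma split_mk (gs hs : List IGame) (hg : gs ≠ []) (hh : hs ≠ []) :
    split (.mk gs) (.mk hs) =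
      .mk (hs.map (fun h => split (.mk gs) h) ++ gs.map (fun g => split g (.mk hs))) := by
  obtain ⟨g, gs, rfl⟩ := List.exists_cons_of_ne_nil hg
  obtain ⟨h, hs, rfl⟩ := List.exists_cons_of_ne_nil hh
  rw [split]
  all_goals simp [List.attach_map_val]
lemma starG_zero : _root_.star 0 = .mk [] := by rw [star_eq]; rfl

lemma addG_nil_nil : addG (.mk []) (.mk []) = .mk [] := by rw [addG_mk]; rfl

lemma PPos_nil : PPos (.mk []) := by rw [PPos_mk]; simp

lemma addG_star_eq (l : List IGame) (n : ℕ) :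
    addG (.mk l) (_root_.star n) =
      .mk (l.map (fun g => addG g (_root_.star n)) ++
           (List.range n).map (fun k => addG (.mk l) (_root_.star k))) := by
  conv_lhs => rw [star_eq, addG_mk]
  rw [List.map_map]
  simp only [Function.comp_def, ← star_eq]

lemma PPos_addG_star (l : List IGame) (n : ℕ) :
    PPos (addG (.mk l) (_root_.star n)) ↔
      (∀ a ∈ l, ¬ PPos (addG a (_root_.star n))) ∧
      (∀ k < n, ¬ PPos (addG (.mk l) (_root_.star k))) := by
  rw [addG_star_eq, PPos_mk]
  simp only [List.forall_mem_append, List.forall_mem_map, List.mem_range]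
lemma nimber_ext_aux (G H : IGame) (n : ℕ) :
    PPos (addG (split G H) (_root_.star n)) ↔ PPos (split (addG G (_root_.star n)) H) := by
  obtain ⟨gs⟩ := G
  obtain ⟨hs⟩ := H
  rcases eq_or_ne hs [] with rfl | hh
  · rw [split_nil_right, split_nil_right]
  rcases eq_or_ne gs [] with rfl | hg
  · rcases Nat.eq_zero_or_pos n with rfl | hn
    · rw [split_nil_left, starG_zero, addG_nil_nil, split_nil_left]
    · have hL : ¬ PPos (addG (.mk []) (_root_.star n)) := by
        rw [PPos_addG_star]
        rintro ⟨-, h2⟩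
        exact h2 0 hn (by rw [starG_zero, addG_nil_nil]; exact PPos_nil)
      have hU0 : (([] : List IGame).map (fun g => addG g (_root_.star n)) ++
           (List.range n).map (fun k => addG (.mk []) (_root_.star k))) ≠ [] := by
        simp [List.range_eq_nil, Nat.pos_iff_ne_zero.mp hn]
      have hR : ¬ PPos (split (addG (.mk []) (_root_.star n)) (.mk hs)) := by
        rw [addG_star_eq, split_mk _ hs hU0 hh, PPos_mk]
        intro hP
        refine hP (split (addG (.mk []) (_root_.star 0)) (.mk hs)) ?_ ?_
        · refine List.mem_append_right _ (List.mem_map.mpr ?_)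
          exact ⟨addG (.mk []) (_root_.star 0), List.mem_append_right _
            (List.mem_map.mpr ⟨0, List.mem_range.mpr hn, rfl⟩), rfl⟩
        · rw [starG_zero, addG_nil_nil, split_nil_left]; exact PPos_nil
      rw [split_nil_left]
      exact iff_of_false hL hR
  · -- main case: gs ≠ [], hs ≠ []
    have IH1 : ∀ h ∈ hs, (PPos (addG (split (.mk gs) h) (_root_.star n)) ↔
        PPos (split (addG (.mk gs) (_root_.star n)) h)) :=
      fun h hmem => nimber_ext_aux (.mk gs) h n
    have IH2 : ∀ g ∈ gs, (PPos (addG (split g (.mk hs)) (_root_.star n)) ↔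
        PPos (split (addG g (_root_.star n)) (.mk hs))) :=
      fun g hmem => nimber_ext_aux g (.mk hs) n
    have IH3 : ∀ k < n, (PPos (addG (split (.mk gs) (.mk hs)) (_root_.star k)) ↔
        PPos (split (addG (.mk gs) (_root_.star k)) (.mk hs))) :=
      fun k hklt => nimber_ext_aux (.mk gs) (.mk hs) k
    have hU : (gs.map (fun g => addG g (_root_.star n)) ++
         (List.range n).map (fun k => addG (.mk gs) (_root_.star k))) ≠ [] := by
      simp [hg]
    constructor
    · intro hL
      rw [split_mk gs hs hg hh, PPos_addG_star] at hL
      obtain ⟨h1, h3⟩ := hL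
      rw [List.forall_mem_append, List.forall_mem_map, List.forall_mem_map] at h1
      obtain ⟨h1, h2⟩ := h1
      rw [← split_mk gs hs hg hh] at h3
      rw [addG_star_eq, split_mk _ hs hU hh, PPos_mk]
      intro x hx
      rw [List.mem_append, List.mem_map, List.mem_map] at hx
      rcases hx with ⟨h, hmem, rfl⟩ | ⟨a, ha, rfl⟩
      · rw [← addG_star_eq]
        exact fun hP => h1 h hmem ((IH1 h hmem).mpr hP)
      · rw [List.mem_append, List.mem_map, List.mem_map] at ha
        rcases ha with ⟨g, hmem, rfl⟩ | ⟨k, hk, rfl⟩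
        · exact fun hP => h2 g hmem ((IH2 g hmem).mpr hP)
        · rw [List.mem_range] at hk
          exact fun hP => h3 k hk ((IH3 k hk).mpr hP)
    · intro hR
      rw [addG_star_eq, split_mk _ hs hU hh, PPos_mk] at hR
      rw [split_mk gs hs hg hh, PPos_addG_star]
      rw [List.forall_mem_append, List.forall_mem_map, List.forall_mem_map,
        ← split_mk gs hs hg hh]
      refine ⟨⟨fun h hmem => ?_, fun g hmem => ?_⟩, fun k hk => ?_⟩
      · refine fun hP => hR (split (addG (.mk gs) (_root_.star n)) h) ?_ ?_
        · rw [← addG_star_eq] at hR ⊢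
          exact List.mem_append_left _ (List.mem_map.mpr ⟨h, hmem, rfl⟩)
        · exact (IH1 h hmem).mp hP
      · refine fun hP => hR (split (addG g (_root_.star n)) (.mk hs)) ?_ ((IH2 g hmem).mp hP)
        refine List.mem_append_right _ (List.mem_map.mpr ?_)
        exact ⟨addG g (_root_.star n), List.mem_append_left _ (List.mem_map.mpr ⟨g, hmem, rfl⟩), rfl⟩
      · refine fun hP => hR (split (addG (.mk gs) (_root_.star k)) (.mk hs)) ?_ ((IH3 k hk).mp hP)
        refine List.mem_append_right _ (List.mem_map.mpr ?_)
        exact ⟨addG (.mk gs) (_root_.star k), List.mem_append_right _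
          (List.mem_map.mpr ⟨k, List.mem_range.mpr hk, rfl⟩), rfl⟩
termination_by sizeOf G + sizeOf H + n
decreasing_by
  · have := IGame.sizeOf_lt_of_mem hmem; omega
  · have := IGame.sizeOf_lt_of_mem hmem; omega
  · omega

/-- Nimber Extension Rule: `(G ∘ H) + *n` is a P-position iff
`(G + *n) ∘ H` is a P-position. -/
theorem nimber_extension_rule (G H : IGame) (n : ℕ) :
    PPos (addG (split G H) (star n)) ↔ PPos (split (addG G (star n)) H) := by
  exact nimber_ext_aux G H n
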